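/- Let n ≥ 5, r ≥ 9, n ≥ r−1, and S := {{1,2},{1,3},…,{1,n},{2,3},{4,5}} ⊆ binom([n],2). Then the chromatic number of the multiplicity-free Kneser hypergraph kg^r_{r-2}(S) equals 2: every edge of kg^r_{r-2}(S) contains both the vertex {2,3} and the vertex {4,5}. -/
import Mathlib

/-- The family `S = {{1,2},{1,3},…,{1,n},{2,3},{4,5}}` of 2-subsets of `[n]`. -/
def Sfam (n : ℕ) : Finset (Finset ℕ) :=
  ((Finset.Icc 2 n).image fun j => ({1, j} : Finset ℕ)) ∪
    {({2, 3} : Finset ℕ), ({4, 5} : Finset ℕ)}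

/-- An edge of the multiplicity-free Kneser hypergraph `kg^r_s(S)`:
an `r`-set of distinct members of `S` in which each ground element occurs
in at most `s` of the sets. -/
def kgEdge (r s : ℕ) (S : Finset (Finset ℕ)) (e : Finset (Finset ℕ)) : Prop :=
  e.card = r ∧ e ⊆ S ∧ ∀ i : ℕ, (e.filter fun T => i ∈ T).card ≤ s

/-- The chromatic number of `kg^r_s(S)`. -/
noncomputable def chromkg (r s : ℕ) (S : Finset (Finset ℕ)) : ℕ :=
  sInf {m | ∃ c : Finset ℕ → Fin m,
    ∀ e, kgEdge r s S e → ∃ A ∈ e, ∃ B ∈ e, c A ≠ c B}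

lemma mem_Sfam_one (n : ℕ) (T : Finset ℕ) (hT : T ∈ Sfam n)
    (h1 : T ≠ {2,3}) (h2 : T ≠ {4,5}) : 1 ∈ T := by
  simp only [Sfam, Finset.mem_union, Finset.mem_image, Finset.mem_insert,
    Finset.mem_singleton] at hT
  rcases hT with ⟨j, _, rfl⟩ | h | h
  · simp
  · exact absurd h h1
  · exact absurd h h2

lemma edge_both (n r : ℕ) (hr : 9 ≤ r) (e : Finset (Finset ℕ))
    (he : kgEdge r (r-2) (Sfam n) e) :
    ({2,3} : Finset ℕ) ∈ e ∧ ({4,5} : Finset ℕ) ∈ e := by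
  obtain ⟨hcard, hsub, hmul⟩ := he
  have key : ∀ T ∈ e, T ≠ {2,3} → T ≠ {4,5} → T ∈ e.filter fun T => 1 ∈ T := by
    intro T hT h1 h2
    exact Finset.mem_filter.2 ⟨hT, mem_Sfam_one n T (hsub hT) h1 h2⟩
  have hle := hmul 1
  constructor
  · by_contra h23
    have hsub2 : e \ {({4,5} : Finset ℕ)} ⊆ e.filter fun T => 1 ∈ T := by
      intro T hT
      rw [Finset.mem_sdiff, Finset.mem_singleton] at hT
      exact key T hT.1 (fun h => h23 (h ▸ hT.1)) hT.2
    have := Finset.card_le_card hsub2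
    have h1 : e.card - 1 ≤ (e \ {({4,5} : Finset ℕ)}).card := by
      have := Finset.card_le_card_sdiff_add_card (s := e) (t := ({({4,5} : Finset ℕ)} : Finset (Finset ℕ)))
      simp at this
      omega
    omega
  · by_contra h45
    have hsub2 : e \ {({2,3} : Finset ℕ)} ⊆ e.filter fun T => 1 ∈ T := by
      intro T hT
      rw [Finset.mem_sdiff, Finset.mem_singleton] at hT
      exact key T hT.1 hT.2 (fun h => h45 (h ▸ hT.1))
    have := Finset.card_le_card hsub2
    have h1 : e.card - 1 ≤ (e \ {({2,3} : Finset ℕ)}).card := by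
      have := Finset.card_le_card_sdiff_add_card (s := e) (t := ({({2,3} : Finset ℕ)} : Finset (Finset ℕ)))
      simp at this
      omega
    omega

lemma edge_exists (n r : ℕ) (hn : 5 ≤ n) (hr : 9 ≤ r) (hnr : r - 1 ≤ n) :
    kgEdge r (r-2) (Sfam n)
      (((Finset.Icc 2 (r-1)).image fun j => ({1, j} : Finset ℕ)) ∪
        {({2, 3} : Finset ℕ), ({4, 5} : Finset ℕ)}) := by
  set A : Finset (Finset ℕ) := (Finset.Icc 2 (r-1)).image fun j => ({1, j} : Finset ℕ) with hA
  set e := A ∪ {({2, 3} : Finset ℕ), ({4, 5} : Finset ℕ)} with he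
  have hone : ∀ T ∈ A, 1 ∈ T := by
    intro T hT
    simp only [hA, Finset.mem_image] at hT
    obtain ⟨j, _, rfl⟩ := hT
    simp
  have hinj : Set.InjOn (fun j => ({1, j} : Finset ℕ)) (Finset.Icc 2 (r-1)) := by
    intro a ha b hb hab
    simp only [Finset.coe_Icc, Set.mem_Icc] at ha hb
    simp only at hab
    have : a ∈ ({1, b} : Finset ℕ) := by rw [← hab]; simp
    simp only [Finset.mem_insert, Finset.mem_singleton] at this
    rcases this with h | h <;> omega
  have hAcard : A.card = r - 2 := by
    rw [hA, Finset.card_image_of_injOn hinj, Nat.card_Icc]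
    omega
  have hdisj : Disjoint A {({2, 3} : Finset ℕ), ({4, 5} : Finset ℕ)} := by
    rw [Finset.disjoint_left]
    intro T hT hT2
    have := hone T hT
    simp only [Finset.mem_insert, Finset.mem_singleton] at hT2
    rcases hT2 with rfl | rfl <;> simp at this
  refine ⟨?_, ?_, ?_⟩
  · rw [he, Finset.card_union_of_disjoint hdisj, hAcard]
    have : ({({2, 3} : Finset ℕ), ({4, 5} : Finset ℕ)} : Finset (Finset ℕ)).card = 2 := by
      decide
    omega
  · rw [he, Sfam]
    apply Finset.union_subset_union _ (le_refl _)
    apply Finset.image_subset_image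
    intro j hj
    simp only [Finset.mem_Icc] at hj ⊢
    omega
  · intro i
    by_cases hi : i = 1
    · subst hi
      have hfsub : e.filter (fun T => 1 ∈ T) ⊆ A := by
        intro T hT
        rw [Finset.mem_filter, he, Finset.mem_union] at hT
        rcases hT.1 with h | h
        · exact h
        · exfalso
          have := hT.2
          simp only [Finset.mem_insert, Finset.mem_singleton] at h
          rcases h with rfl | rfl <;> simp at this
      calc (e.filter fun T => 1 ∈ T).card ≤ A.card := Finset.card_le_card hfsub
        _ ≤ r - 2 := by omega
    · have hfsub : e.filter (fun T => i ∈ T) ⊆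
          {({1, i} : Finset ℕ), ({2, 3} : Finset ℕ), ({4, 5} : Finset ℕ)} := by
        intro T hT
        rw [Finset.mem_filter, he, Finset.mem_union] at hT
        obtain ⟨hT1, hT2⟩ := hT
        simp only [Finset.mem_insert, Finset.mem_singleton]
        rcases hT1 with h | h
        · left
          simp only [hA, Finset.mem_image] at h
          obtain ⟨j, hj, rfl⟩ := h
          simp only [Finset.mem_insert, Finset.mem_singleton] at hT2
          rcases hT2 with rfl | rfl
          · exact absurd rfl hi
          · rfl
        · simp only [Finset.mem_insert, Finset.mem_singleton] at h
          tauto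
      have := Finset.card_le_card hfsub
      have h3 : ({({1, i} : Finset ℕ), ({2, 3} : Finset ℕ), ({4, 5} : Finset ℕ)} :
          Finset (Finset ℕ)).card ≤ 3 := Finset.card_insert_le _ _ |>.trans (by
        have := Finset.card_insert_le ({2,3} : Finset ℕ) ({({4,5} : Finset ℕ)} : Finset (Finset ℕ))
        simp at this ⊢
        omega)
      omega

/-- For `n ≥ 5`, `r ≥ 9`, `n ≥ r-1` and `S = {{1,2},…,{1,n},{2,3},{4,5}}`,
every edge of `kg^r_{r-2}(S)` contains both `{2,3}` and `{4,5}`, and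
`χ(kg^r_{r-2}(S)) = 2`. -/
theorem stmt11 (n r : ℕ) (hn : 5 ≤ n) (hr : 9 ≤ r) (hnr : r - 1 ≤ n) :
    (∀ e, kgEdge r (r - 2) (Sfam n) e →
      ({2, 3} : Finset ℕ) ∈ e ∧ ({4, 5} : Finset ℕ) ∈ e) ∧
    chromkg r (r - 2) (Sfam n) = 2 := by
  have hboth := edge_both n r hr
  refine ⟨hboth, ?_⟩
  have h2mem : 2 ∈ {m | ∃ c : Finset ℕ → Fin m,
      ∀ e, kgEdge r (r-2) (Sfam n) e → ∃ A ∈ e, ∃ B ∈ e, c A ≠ c B} := by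
    refine ⟨fun A => if A = {2,3} then 0 else 1, fun e he => ?_⟩
    obtain ⟨h23, h45⟩ := hboth e he
    refine ⟨{2,3}, h23, {4,5}, h45, ?_⟩
    have hne : ({4,5} : Finset ℕ) ≠ {2,3} := by decide
    simp [hne]
  refine le_antisymm (Nat.sInf_le h2mem) ?_
  refine le_csInf ⟨2, h2mem⟩ ?_
  intro m hm
  obtain ⟨c, hc⟩ := hm
  by_contra hlt
  push_neg at hlt
  interval_cases m
  · exact (c ∅).elim0
  · obtain ⟨A, _, B, _, hAB⟩ := hc _ (edge_exists n r hn hr hnr)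
    exact hAB (Subsingleton.elim _ _)
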